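/- Let G be a finite connected simple graph with fixed distinct vertices v₁ and w such that G − v₁ is connected, and suppose δ_G(w) = −d for a natural number d ≥ 1. Let G₂ be the graph obtained from G by attaching a path u_d u_{d−1} … u_1 u_0 of length d at w (identifying u_d with w, the vertices u_{d−1}, …, u_0 being new). Then δ_{G₂}(u_i) = −i for every i ∈ {0, 1, …, d}. -/

import Mathlib

open SimpleGraph

/-- The Wiener index: sum of distances over unordered pairs of vertices. -/
noncomputable def wiener {V : Type*} [Fintype V] (G : SimpleGraph V) : ℕ :=
  (∑ u : V, ∑ v : V, G.dist u v) / 2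

/-- The transmission of a vertex: sum of distances to all vertices. -/
noncomputable def transmission {V : Type*} [Fintype V] (G : SimpleGraph V) (v : V) : ℕ :=
  ∑ u : V, G.dist v u

/-- The graph `G - v`: induced subgraph on the vertices distinct from `v`. -/
def delVert {V : Type*} (G : SimpleGraph V) (v : V) : SimpleGraph {u : V // u ≠ v} :=
  SimpleGraph.comap Subtype.val G

/-- A vertex is good if `G - v` is connected and has the same Wiener index as `G`. -/
def good {V : Type*} [Fintype V] [DecidableEq V] (G : SimpleGraph V) (v : V) : Prop :=
  (delVert G v).Connected ∧ wiener (delVert G v) = wiener G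

/-- `δ_G(x) = t_G(x) − t_{G−v₁}(x)` (as an integer), for a fixed vertex `v₁` and `x ≠ v₁`.
(The value when `x = v₁` is irrelevant and set to `t_G(x)`.) -/
noncomputable def delta {V : Type*} [Fintype V] [DecidableEq V]
    (G : SimpleGraph V) (v₁ x : V) : ℤ :=
  (transmission G x : ℤ) - if h : x = v₁ then 0 else (transmission (delVert G v₁) ⟨x, h⟩ : ℤ)

/-- The graph obtained from `G` by attaching at `w` a path `u_d u_{d-1} ⋯ u_1 u_0` of length
`d`, identifying `u_d` with `w`; the new vertex `Sum.inr j` represents `u_j` (`0 ≤ j < d`). -/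
def attachPath {V : Type*} (G : SimpleGraph V) (w : V) (d : ℕ) : SimpleGraph (V ⊕ Fin d) where
  Adj x y :=
    match x, y with
    | Sum.inl a, Sum.inl b => G.Adj a b
    | Sum.inl a, Sum.inr j => a = w ∧ (j : ℕ) = d - 1
    | Sum.inr j, Sum.inl a => a = w ∧ (j : ℕ) = d - 1
    | Sum.inr j, Sum.inr j' => (j : ℕ) + 1 = j' ∨ (j' : ℕ) + 1 = j
  symm := by
    constructor
    intro x y h
    cases x <;> cases y <;> simp_all [SimpleGraph.adj_comm] <;> tauto
  loopless := by
    constructor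
    intro x h
    cases x <;> simp_all

/-- The vertex `u_i` of `attachPath G w d`, for `0 ≤ i ≤ d` (with `u_d = w`). -/
def pathVert {V : Type*} (w : V) (d : ℕ) (i : ℕ) : V ⊕ Fin d :=
  if h : i < d then Sum.inr ⟨i, h⟩ else Sum.inl w

section Aux
variable {V : Type*} {G : SimpleGraph V} {w : V} {d : ℕ}

lemma attach_adj_inl_inl {a b : V} :
    (attachPath G w d).Adj (Sum.inl a) (Sum.inl b) ↔ G.Adj a b := Iff.rfl

lemma attach_adj_inl_inr {a : V} {j : Fin d} :
    (attachPath G w d).Adj (Sum.inl a) (Sum.inr j) ↔ (a = w ∧ (j : ℕ) = d - 1) := Iff.rfl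

lemma attach_adj_inr_inl {a : V} {j : Fin d} :
    (attachPath G w d).Adj (Sum.inr j) (Sum.inl a) ↔ (a = w ∧ (j : ℕ) = d - 1) := Iff.rfl

lemma attach_adj_inr_inr {j j' : Fin d} :
    (attachPath G w d).Adj (Sum.inr j) (Sum.inr j') ↔
      ((j : ℕ) + 1 = j' ∨ (j' : ℕ) + 1 = j) := Iff.rfl

def attachHom (G : SimpleGraph V) (w : V) (d : ℕ) : G →g attachPath G w d :=
  ⟨Sum.inl, fun h => h⟩

lemma lip_walk {W : Type*} {H : SimpleGraph W} (f : W → ℤ)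
    (hf : ∀ ⦃x y⦄, H.Adj x y → |f x - f y| ≤ 1) :
    ∀ {x y : W} (p : H.Walk x y), |f x - f y| ≤ p.length := by
  intro x y p
  induction p with
  | nil => simp
  | @cons a b c h p ih =>
    calc |f a - f c| ≤ |f a - f b| + |f b - f c| := abs_sub_le _ _ _
    _ ≤ 1 + p.length := add_le_add (hf h) ih
    _ = ((p.length + 1 : ℕ) : ℤ) := by push_cast; ring
    _ = _ := by simp [SimpleGraph.Walk.length_cons]

lemma lip_dist {W : Type*} {H : SimpleGraph W} (f : W → ℤ)
    (hf : ∀ ⦃x y⦄, H.Adj x y → |f x - f y| ≤ 1) {x y : W} (h : H.Reachable x y) :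
    |f x - f y| ≤ H.dist x y := by
  obtain ⟨p, hp⟩ := h.exists_walk_length_eq_dist
  exact hp ▸ lip_walk f hf p

lemma attach_walk (hd : 1 ≤ d) : ∀ (m i j : ℕ), i + m = j → j ≤ d →
    ∃ p : (attachPath G w d).Walk (pathVert w d i) (pathVert w d j), p.length = m := by
  intro m
  induction m with
  | zero =>
    intro i j hij hj
    obtain rfl : i = j := by omega
    exact ⟨SimpleGraph.Walk.nil, rfl⟩
  | succ m ih =>
    intro i j hij hj
    have h1 : i < d := by omega
    have hadj : (attachPath G w d).Adj (pathVert w d i) (pathVert w d (i + 1)) := by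
      by_cases h2 : i + 1 < d
      · simp only [pathVert, dif_pos h1, dif_pos h2]
        exact Or.inl rfl
      · simp only [pathVert, dif_pos h1, dif_neg h2]
        refine ⟨rfl, ?_⟩
        simp only [Fin.val_mk]
        omega
    obtain ⟨p, hp⟩ := ih (i + 1) j (by omega) hj
    exact ⟨SimpleGraph.Walk.cons hadj p, by simp [hp]⟩

lemma attach_reach_w (hG : G.Connected) (hd : 1 ≤ d) (x : V ⊕ Fin d) :
    (attachPath G w d).Reachable x (Sum.inl w) := by
  cases x with
  | inl a => exact (hG a w).map (attachHom G w d)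
  | inr j =>
    obtain ⟨p, -⟩ := attach_walk (G := G) (w := w) hd (d - j) j d (by omega) le_rfl
    have e1 : pathVert w d (j : ℕ) = Sum.inr j := by simp [pathVert, j.isLt]
    have e2 : pathVert w d d = Sum.inl w := by simp [pathVert]
    rw [e1, e2] at p
    exact ⟨p⟩

lemma attach_connected (hG : G.Connected) (hd : 1 ≤ d) : (attachPath G w d).Connected := by
  rw [SimpleGraph.connected_iff_exists_forall_reachable]
  exact ⟨Sum.inl w, fun x => (attach_reach_w hG hd x).symm⟩

end Aux

noncomputable def gfun {V : Type*} (G : SimpleGraph V) (w : V) (d : ℕ) (a : V) : V ⊕ Fin d → ℤ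
  | Sum.inl x => G.dist a x
  | Sum.inr j => (G.dist a w : ℤ) + d - (j : ℕ)

section Aux2
variable {V : Type*} {G : SimpleGraph V} {w : V} {d : ℕ}

lemma dist_adj_le (hG : G.Connected) {x y : V} (h : G.Adj x y) (a : V) :
    G.dist a x ≤ G.dist a y + 1 := by
  have h1 : G.dist a x ≤ G.dist a y + G.dist y x := hG.dist_triangle
  have h2 : G.dist y x ≤ 1 := by
    simpa using SimpleGraph.dist_le (SimpleGraph.Walk.cons h.symm SimpleGraph.Walk.nil)
  omega

lemma gfun_lip (hG : G.Connected) (hd : 1 ≤ d) (a : V) :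
    ∀ ⦃x y⦄, (attachPath G w d).Adj x y → |gfun G w d a x - gfun G w d a y| ≤ 1 := by
  intro x y h
  rw [abs_sub_le_iff]
  cases x with
  | inl x =>
    cases y with
    | inl y =>
      rw [attach_adj_inl_inl] at h
      have h1 := dist_adj_le hG h a
      have h2 := dist_adj_le hG h.symm a
      simp only [gfun]
      omega
    | inr j =>
      rw [attach_adj_inl_inr] at h
      obtain ⟨rfl, hj⟩ := h
      simp only [gfun]
      omega
  | inr j =>
    cases y with
    | inl y =>
      rw [attach_adj_inr_inl] at h
      obtain ⟨rfl, hj⟩ := h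
      simp only [gfun]
      omega
    | inr j' =>
      rw [attach_adj_inr_inr] at h
      have hj := j.isLt
      have hj' := j'.isLt
      simp only [gfun]
      omega

lemma gfun_pathVert (a : V) {i : ℕ} (hi : i ≤ d) :
    gfun G w d a (pathVert w d i) = (G.dist a w : ℤ) + d - i := by
  by_cases h : i < d
  · simp only [pathVert, dif_pos h, gfun]
  · have : i = d := by omega
    subst this
    simp [pathVert, gfun]

lemma attach_dist_pathVert_w (hG : G.Connected) (hd : 1 ≤ d) {i : ℕ} (hi : i ≤ d) :
    (attachPath G w d).dist (pathVert w d i) (Sum.inl w) ≤ d - i := by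
  obtain ⟨p, hp⟩ := attach_walk (G := G) (w := w) hd (d - i) i d (by omega) le_rfl
  have e2 : pathVert w d d = Sum.inl w := by simp [pathVert]
  refine le_trans (SimpleGraph.dist_le (p.copy rfl e2)) ?_
  rw [SimpleGraph.Walk.length_copy, hp]

lemma attach_dist_inl_inl_le (hG : G.Connected) (a b : V) :
    (attachPath G w d).dist (Sum.inl a) (Sum.inl b) ≤ G.dist a b := by
  obtain ⟨p, hp⟩ := (hG a b).exists_walk_length_eq_dist
  have := SimpleGraph.dist_le (p.map (attachHom G w d))
  rw [SimpleGraph.Walk.length_map, hp] at this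
  exact this

lemma attach_dist_pathVert_inl (hG : G.Connected) (hd : 1 ≤ d) (a : V) {i : ℕ} (hi : i ≤ d) :
    (attachPath G w d).dist (pathVert w d i) (Sum.inl a) = (d - i) + G.dist w a := by
  have hc := attach_connected (w := w) hG hd
  have hub : (attachPath G w d).dist (pathVert w d i) (Sum.inl a) ≤ (d - i) + G.dist w a := by
    have h1 := attach_dist_pathVert_w (G := G) (w := w) hG hd hi
    have h2 := attach_dist_inl_inl_le (G := G) (w := w) (d := d) hG w a
    have h3 : (attachPath G w d).dist (pathVert w d i) (Sum.inl a) ≤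
        (attachPath G w d).dist (pathVert w d i) (Sum.inl w) +
        (attachPath G w d).dist (Sum.inl w) (Sum.inl a) := hc.dist_triangle
    omega
  have hlb := lip_dist (gfun G w d a) (gfun_lip hG hd a)
      (hc.preconnected (pathVert w d i) (Sum.inl a))
  rw [gfun_pathVert a hi] at hlb
  have ha : gfun G w d a (Sum.inl a) = 0 := by simp [gfun]
  rw [ha, sub_zero] at hlb
  have habs : (G.dist a w : ℤ) + d - i ≤
      ((attachPath G w d).dist (pathVert w d i) (Sum.inl a) : ℤ) :=
    le_trans (le_abs_self _) hlb
  have hcomm : G.dist a w = G.dist w a := SimpleGraph.dist_comm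
  omega

lemma attach_dist_pathVert_pathVert (hG : G.Connected) (hd : 1 ≤ d) {i j : ℕ}
    (hi : i ≤ d) (hj : j ≤ d) :
    (attachPath G w d).dist (pathVert w d i) (pathVert w d j) = (i - j) + (j - i) := by
  have hc := attach_connected (w := w) hG hd
  have hub : (attachPath G w d).dist (pathVert w d i) (pathVert w d j) ≤ (i - j) + (j - i) := by
    rcases le_total i j with h | h
    · obtain ⟨p, hp⟩ := attach_walk (G := G) (w := w) hd (j - i) i j (by omega) hj
      have := hp ▸ SimpleGraph.dist_le p
      omega
    · obtain ⟨p, hp⟩ := attach_walk (G := G) (w := w) hd (i - j) j i (by omega) hi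
      have := hp ▸ SimpleGraph.dist_le p
      rw [SimpleGraph.dist_comm] at this
      omega
  have hlb := lip_dist (gfun G w d w) (gfun_lip hG hd w)
      (hc.preconnected (pathVert w d i) (pathVert w d j))
  rw [gfun_pathVert w hi, gfun_pathVert w hj] at hlb
  rw [abs_le] at hlb
  omega

end Aux2

section Aux3
variable {V : Type*} {G : SimpleGraph V} {w : V} {d : ℕ}

lemma transmission_attach [Fintype V] (hG : G.Connected) (hd : 1 ≤ d) {i : ℕ} (hi : i ≤ d) :
    transmission (attachPath G w d) (pathVert w d i)
      = Fintype.card V * (d - i) + transmission G w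
        + ∑ j : Fin d, ((i - (j : ℕ)) + ((j : ℕ) - i)) := by
  rw [transmission, Fintype.sum_sum_type]
  have h1 : ∀ a : V, (attachPath G w d).dist (pathVert w d i) (Sum.inl a)
      = (d - i) + G.dist w a := fun a => attach_dist_pathVert_inl hG hd a hi
  have h2 : ∀ j : Fin d, (attachPath G w d).dist (pathVert w d i) (Sum.inr j)
      = (i - (j : ℕ)) + ((j : ℕ) - i) := by
    intro j
    have e1 : pathVert w d (j : ℕ) = Sum.inr j := by simp [pathVert, j.isLt]
    rw [← e1]
    exact attach_dist_pathVert_pathVert hG hd hi (le_of_lt j.isLt)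
  rw [Finset.sum_congr rfl (fun a _ => h1 a), Finset.sum_congr rfl (fun j _ => h2 j)]
  rw [Finset.sum_add_distrib, Finset.sum_const, Finset.card_univ, smul_eq_mul]
  rfl

-- iso machinery
lemma iso_dist {W W' : Type*} {H : SimpleGraph W} {H' : SimpleGraph W'} (f : H ≃g H')
    {x y : W} (h : H.Reachable x y) : H'.dist (f x) (f y) = H.dist x y := by
  apply le_antisymm
  · obtain ⟨p, hp⟩ := h.exists_walk_length_eq_dist
    have := SimpleGraph.dist_le (p.map f.toHom)
    simpa [hp] using this
  · obtain ⟨p, hp⟩ := (h.map f.toHom).exists_walk_length_eq_dist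
    have h2 := SimpleGraph.dist_le (p.map f.symm.toHom)
    rw [SimpleGraph.Walk.length_map, hp] at h2
    simpa using h2

def delEquiv (v₁ w : V) (d : ℕ) :
    {x : V ⊕ Fin d // x ≠ Sum.inl v₁} ≃ ({u : V // u ≠ v₁} ⊕ Fin d) where
  toFun x := match x with
    | ⟨Sum.inl a, h⟩ => Sum.inl ⟨a, fun ha => h (by rw [ha])⟩
    | ⟨Sum.inr j, _⟩ => Sum.inr j
  invFun y := match y with
    | Sum.inl a => ⟨Sum.inl a.1, by simp [a.2]⟩
    | Sum.inr j => ⟨Sum.inr j, by simp⟩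
  left_inv := by rintro ⟨x | j, h⟩ <;> rfl
  right_inv := by rintro (⟨a, h⟩ | j) <;> rfl

def delIso (G : SimpleGraph V) (v₁ w : V) (hne : v₁ ≠ w) (d : ℕ) :
    delVert (attachPath G w d) (Sum.inl v₁) ≃g
      attachPath (delVert G v₁) ⟨w, fun h => hne h.symm⟩ d where
  toEquiv := delEquiv v₁ w d
  map_rel_iff' := by
    rintro ⟨x | j, hx⟩ ⟨y | j', hy⟩ <;>
      simp [delEquiv, delVert, attachPath, Subtype.ext_iff]

end Aux3

section Aux4
variable {V : Type*} {G : SimpleGraph V} {w : V} {d : ℕ}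

lemma delEquiv_pathVert {v₁ : V} (hwv : w ≠ v₁) {i : ℕ} (hi : i ≤ d)
    (hx : pathVert w d i ≠ Sum.inl v₁) :
    delEquiv v₁ w d ⟨pathVert w d i, hx⟩ = pathVert (⟨w, hwv⟩ : {u : V // u ≠ v₁}) d i := by
  by_cases h : i < d
  · simp only [pathVert, dif_pos h]
    rfl
  · simp only [pathVert, dif_neg h]
    rfl

theorem delta_attachPath'' {V : Type*} [Fintype V] [DecidableEq V]
    (G : SimpleGraph V) (hG : G.Connected) (v₁ w : V) (hne : v₁ ≠ w)
    (hconn : (delVert G v₁).Connected)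
    (d : ℕ) (hd : 1 ≤ d) (hδ : delta G v₁ w = -(d : ℤ)) :
    ∀ i : ℕ, i ≤ d →
      delta (attachPath G w d) (Sum.inl v₁) (pathVert w d i) = -(i : ℤ) := by
  intro i hi
  have hwv : ¬ (w = v₁) := fun h => hne h.symm
  have hnev : pathVert w d i ≠ Sum.inl v₁ := by
    unfold pathVert
    split
    · simp
    · simpa using hwv
  rw [delta, dif_neg hnev]
  rw [delta, dif_neg hwv] at hδ
  set w' : {u : V // u ≠ v₁} := ⟨w, hwv⟩ with hw'
  have t2 : transmission (attachPath G w d) (pathVert w d i)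
      = Fintype.card V * (d - i) + transmission G w
        + ∑ j : Fin d, ((i - (j : ℕ)) + ((j : ℕ) - i)) :=
    transmission_attach hG hd hi
  have hc2' : (attachPath (delVert G v₁) w' d).Connected := attach_connected hconn hd
  set e := delIso G v₁ w hne d with hedef
  have he : e ⟨pathVert w d i, hnev⟩ = pathVert w' d i := delEquiv_pathVert hwv hi hnev
  have t2' : transmission (delVert (attachPath G w d) (Sum.inl v₁)) ⟨pathVert w d i, hnev⟩
      = Fintype.card {u : V // u ≠ v₁} * (d - i) + transmission (delVert G v₁) w'
        + ∑ j : Fin d, ((i - (j : ℕ)) + ((j : ℕ) - i)) := by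
    have key : ∀ u : {x : V ⊕ Fin d // x ≠ Sum.inl v₁},
        (delVert (attachPath G w d) (Sum.inl v₁)).dist ⟨pathVert w d i, hnev⟩ u
          = (attachPath (delVert G v₁) w' d).dist (e ⟨pathVert w d i, hnev⟩) (e u) := by
      intro u
      have hr : (delVert (attachPath G w d) (Sum.inl v₁)).Reachable
          ⟨pathVert w d i, hnev⟩ u := by
        have := (hc2'.preconnected (e ⟨pathVert w d i, hnev⟩) (e u)).map e.symm.toHom
        simpa using this
      exact (iso_dist e hr).symm
    rw [transmission, Finset.sum_congr rfl (fun u _ => key u)]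
    refine (Fintype.sum_equiv e.toEquiv _
        (fun y => (attachPath (delVert G v₁) w' d).dist (e ⟨pathVert w d i, hnev⟩) y)
        (fun u => rfl)).trans ?_
    rw [he]
    exact transmission_attach hconn hd hi
  rw [t2, t2']
  have hNM : Fintype.card V = Fintype.card {u : V // u ≠ v₁} + 1 := by
    have h1 : Fintype.card {u : V // u ≠ v₁} = Fintype.card V - Fintype.card {u : V // u = v₁} :=
      Fintype.card_subtype_compl _
    have h2 : Fintype.card {u : V // u = v₁} = 1 := Fintype.card_subtype_eq v₁
    have h3 : 0 < Fintype.card V := Fintype.card_pos_iff.mpr ⟨v₁⟩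
    omega
  rw [hNM]
  have hk : ((d - i : ℕ) : ℤ) = (d : ℤ) - i := by omega
  push_cast
  rw [hk]
  push_cast at hδ
  linarith
end Aux4

/-- If `δ_G(w) = −d` (with `d ≥ 1`), then after attaching a path
`u_d u_{d-1} ⋯ u_1 u_0` of length `d` at `w` (identifying `u_d` with `w`),
we have `δ_{G₂}(u_i) = −i` for every `0 ≤ i ≤ d`. -/
theorem delta_attachPath {V : Type*} [Fintype V] [DecidableEq V]
    (G : SimpleGraph V) (hG : G.Connected) (v₁ w : V) (hne : v₁ ≠ w)
    (hconn : (delVert G v₁).Connected)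
    (d : ℕ) (hd : 1 ≤ d) (hδ : delta G v₁ w = -(d : ℤ)) :
    ∀ i : ℕ, i ≤ d →
      delta (attachPath G w d) (Sum.inl v₁) (pathVert w d i) = -(i : ℤ) := by
  exact delta_attachPath'' G hG v₁ w hne hconn d hd hδ
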